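/- Let Γ be a set of cardinality less than 𝔟 and let K be a compact subset of the cube [0,1]^Γ such that some lower semicontinuous quasi metric fragments K (K is quasi Radon-Nikodým). Then there is a countable decomposition Γ = ⋃_{n∈ℕ} Γ_n such that the pseudometric d_{Γ_n} fragments K for every n ∈ ℕ. -/

import Mathlib

open Set Topology Cardinal

/-- A map `f : X × X → ℝ` fragments the topological space `X` if for every nonempty
subset `L` of `X` and every `ε > 0` there is a nonempty relatively open subset of `L`
of `f`-diameter less than `ε`. -/
def Fragments {X : Type*} [TopologicalSpace X] (f : X → X → ℝ) : Prop :=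
  ∀ L : Set X, L.Nonempty → ∀ ε : ℝ, 0 < ε →
    ∃ V : Set X, IsOpen V ∧ (V ∩ L).Nonempty ∧
      ∀ x ∈ V ∩ L, ∀ y ∈ V ∩ L, f x y < ε

/-- `f` (defined on the ambient space `X`) fragments the subset `K`. -/
def FragmentsOn {X : Type*} [TopologicalSpace X] (f : X → X → ℝ) (K : Set X) : Prop :=
  ∀ L : Set X, L ⊆ K → L.Nonempty → ∀ ε : ℝ, 0 < ε →
    ∃ V : Set X, IsOpen V ∧ (V ∩ L).Nonempty ∧
      ∀ x ∈ V ∩ L, ∀ y ∈ V ∩ L, f x y < ε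

/-- A quasi metric: nonnegative, symmetric, and vanishing exactly on the diagonal. -/
def IsQuasiMetric {X : Type*} (f : X → X → ℝ) : Prop :=
  (∀ x y, 0 ≤ f x y) ∧ (∀ x y, f x y = f y x) ∧ (∀ x y, f x y = 0 ↔ x = y)

/-- A metric (as a two-variable real function): symmetric, vanishing exactly on the
diagonal, and satisfying the triangle inequality. -/
def IsMetricFun {X : Type*} (d : X → X → ℝ) : Prop :=
  (∀ x y, d x y = d y x) ∧ (∀ x y, d x y = 0 ↔ x = y) ∧
    (∀ x y z, d x z ≤ d x y + d y z)

/-- Lower semicontinuity of a two-variable map for the product topology. -/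
def LSC {X : Type*} [TopologicalSpace X] (f : X → X → ℝ) : Prop :=
  LowerSemicontinuous (fun p : X × X => f p.1 p.2)

/-- A subset of `ℕ → ℕ` is σ-bounded (for the pointwise order) if it is a countable
union of order-bounded sets. -/
def SigmaBounded (S : Set (ℕ → ℕ)) : Prop :=
  ∃ B : ℕ → Set (ℕ → ℕ), S ⊆ (⋃ n, B n) ∧ ∀ n, ∃ τ : ℕ → ℕ, ∀ σ ∈ B n, σ ≤ τ

/-- The cardinal `𝔟`: the least cardinality of a subset of `ℕ → ℕ` which is not
σ-bounded for the pointwise order. -/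
noncomputable def cardinalB : Cardinal :=
  sInf { c | ∃ S : Set (ℕ → ℕ), ¬ SigmaBounded S ∧ #S = c }

/-- The pseudometric `d_A` on `[0,1]^Γ` given by `d_A(x,y) = sup_{γ ∈ A} |x_γ - y_γ|`. -/
noncomputable def dGamma {Γ : Type*} (A : Set Γ) (x y : Γ → ℝ) : ℝ :=
  ⨆ γ : A, |x γ - y γ|

/-- For every quasi Radon-Nikodým compact subset `K` of a cube `[0,1]^Γ` with `|Γ| < 𝔟`,
there is a countable decomposition `Γ = ⋃_n Γ_n` such that each `d_{Γ_n}` fragments `K`. -/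
theorem statement6 {Γ : Type u} (hΓ : Cardinal.mk Γ < Cardinal.lift.{u} cardinalB)
    (K : Set (Γ → ℝ))
    (hcube : ∀ x ∈ K, ∀ γ, x γ ∈ Set.Icc (0 : ℝ) 1) (hcomp : IsCompact K)
    (hqRN : ∃ f : K → K → ℝ, IsQuasiMetric f ∧ LSC f ∧ Fragments f) :
    ∃ Γn : ℕ → Set Γ, (⋃ n, Γn n) = Set.univ ∧
      ∀ n, FragmentsOn (dGamma (Γn n)) K := by
  obtain ⟨f, ⟨hf0, hfsymm, hfeq⟩, hlsc, hfrag⟩ := hqRN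
  haveI : CompactSpace K := isCompact_iff_compactSpace.mp hcomp
  -- Each coordinate has a modulus of uniform continuity with respect to f.
  have hex : ∀ (γ : Γ) (m : ℕ), ∃ k : ℕ,
      ∀ x y : K, f x y ≤ 1 / (k + 1 : ℝ) →
        |(x : Γ → ℝ) γ - (y : Γ → ℝ) γ| < 1 / (m + 1 : ℝ) := by
    intro γ m
    set C : Set (K × K) :=
      {p | 1 / (m + 1 : ℝ) ≤ |(p.1 : Γ → ℝ) γ - (p.2 : Γ → ℝ) γ|} with hC
    have hcontg : Continuous fun p : K × K => |(p.1 : Γ → ℝ) γ - (p.2 : Γ → ℝ) γ| := by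
      apply Continuous.abs
      exact ((continuous_apply γ).comp (continuous_subtype_val.comp continuous_fst)).sub
        ((continuous_apply γ).comp (continuous_subtype_val.comp continuous_snd))
    have hCclosed : IsClosed C := isClosed_le continuous_const hcontg
    have hCcomp : IsCompact C := hCclosed.isCompact
    set U : ℕ → Set (K × K) := fun k => {p | 1 / (k + 1 : ℝ) < f p.1 p.2} with hU
    have hUopen : ∀ k, IsOpen (U k) := fun k =>
      lowerSemicontinuous_iff_isOpen_preimage.1 hlsc (1 / (k + 1 : ℝ))
    have hcover : C ⊆ ⋃ k, U k := by
      intro p hp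
      have hne : p.1 ≠ p.2 := by
        intro h
        have hp' : 1 / (m + 1 : ℝ) ≤ |(p.1 : Γ → ℝ) γ - (p.2 : Γ → ℝ) γ| := hp
        rw [h, sub_self, abs_zero] at hp'
        have : (0:ℝ) < 1 / (m + 1 : ℝ) := by positivity
        linarith
      have hpos : 0 < f p.1 p.2 :=
        lt_of_le_of_ne (hf0 _ _) (fun h => hne ((hfeq _ _).mp h.symm))
      obtain ⟨k, hk⟩ := exists_nat_one_div_lt hpos
      exact Set.mem_iUnion.2 ⟨k, hk⟩
    obtain ⟨t, ht⟩ := hCcomp.elim_finite_subcover U hUopen hcover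
    refine ⟨t.sup id, ?_⟩
    intro x y hxy
    by_contra hcon
    push_neg at hcon
    have hmem : (x, y) ∈ C := hcon
    obtain ⟨k, hkt, hk⟩ := by
      have := ht hmem
      simpa using this
    have hmono : (1 : ℝ) / (t.sup id + 1) ≤ 1 / (k + 1 : ℝ) := by
      have hk' : (k : ℝ) ≤ t.sup id := by
        exact_mod_cast Finset.le_sup (f := id) hkt
      apply one_div_le_one_div_of_le
      · positivity
      · linarith
    have hk2 : 1 / (k + 1 : ℝ) < f x y := hk
    linarith
  choose σ hσ using hex
  -- The family of moduli is σ-bounded since |Γ| < 𝔟.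
  have hSB : SigmaBounded (Set.range σ) := by
    by_contra h
    have h1 : cardinalB ≤ #(Set.range σ) := csInf_le' ⟨Set.range σ, h, rfl⟩
    have h2 : Cardinal.lift.{u} cardinalB ≤ Cardinal.lift.{u} #(Set.range σ) :=
      Cardinal.lift_le.mpr h1
    have h3 : Cardinal.lift.{u} #(Set.range σ) ≤ Cardinal.lift.{0} #Γ :=
      Cardinal.mk_range_le_lift
    rw [Cardinal.lift_uzero] at h3
    exact absurd (lt_of_le_of_lt (le_trans h2 h3) hΓ) (lt_irrefl _)
  obtain ⟨B, hSsub, hτ⟩ := hSB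
  refine ⟨fun n => {γ | σ γ ∈ B n}, ?_, ?_⟩
  · ext γ
    simp only [Set.mem_iUnion, Set.mem_univ, iff_true, Set.mem_setOf_eq]
    have : σ γ ∈ ⋃ n, B n := hSsub ⟨γ, rfl⟩
    simpa using this
  · intro n L hLK hLne ε hε
    obtain ⟨τ, hτn⟩ := hτ n
    obtain ⟨m, hm⟩ := exists_nat_one_div_lt hε
    set k := τ m with hk
    obtain ⟨x₀, hx₀⟩ := hLne
    have hLne' : (Subtype.val ⁻¹' L : Set K).Nonempty := ⟨⟨x₀, hLK hx₀⟩, hx₀⟩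
    have hεk : (0:ℝ) < 1 / (k + 1 : ℝ) := by positivity
    obtain ⟨V, hVopen, hVLne, hVsmall⟩ := hfrag (Subtype.val ⁻¹' L) hLne' _ hεk
    obtain ⟨W, hWopen, hWV⟩ := isOpen_induced_iff.mp hVopen
    refine ⟨W, hWopen, ?_, ?_⟩
    · obtain ⟨p, hpV, hpL⟩ := hVLne
      refine ⟨p.val, ?_, hpL⟩
      rw [← hWV] at hpV
      exact hpV
    · intro x hx y hy
      have hxK : x ∈ K := hLK hx.2
      have hyK : y ∈ K := hLK hy.2
      set x' : K := ⟨x, hxK⟩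
      set y' : K := ⟨y, hyK⟩
      have hx' : x' ∈ V ∩ (Subtype.val ⁻¹' L) := by
        constructor
        · rw [← hWV]; exact hx.1
        · exact hx.2
      have hy' : y' ∈ V ∩ (Subtype.val ⁻¹' L) := by
        constructor
        · rw [← hWV]; exact hy.1
        · exact hy.2
      have hfxy : f x' y' < 1 / (k + 1 : ℝ) := hVsmall x' hx' y' hy'
      have key : ∀ γ ∈ {γ | σ γ ∈ B n}, |x γ - y γ| < 1 / (m + 1 : ℝ) := by
        intro γ hγ
        have hle : σ γ m ≤ k := hτn (σ γ) hγ m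
        have hmono : (1:ℝ) / (k + 1) ≤ 1 / (σ γ m + 1 : ℝ) := by
          apply one_div_le_one_div_of_le
          · positivity
          · exact_mod_cast add_le_add_left (Nat.cast_le.mpr hle) 1
        exact hσ γ m x' y' (le_trans hfxy.le hmono)
      have hbound : dGamma {γ | σ γ ∈ B n} x y ≤ 1 / (m + 1 : ℝ) := by
        apply Real.iSup_le
        · rintro ⟨γ, hγ⟩
          exact (key γ hγ).le
        · positivity
      exact lt_of_le_of_lt hbound hm
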